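/- Let q ∈ ℝ with 0 < q < 1 and let x ∈ ℝ with x ≠ 0 be such that 1 + q^j(q − 1)x ≠ 0 for every j ∈ ℕ. Then the q-exponential is an eigenfunction of the q-derivative with eigenvalue 1: (E_q(qx) − E_q(x))/((q − 1)x) = E_q(x). -/

import Mathlib

/-- Bound on the log near 1: `|log (1+t)| ≤ 2|t|` for `|t| ≤ 1/2`. -/
lemma abs_log_one_add_le {t : ℝ} (ht : |t| ≤ 1/2) : |Real.log (1 + t)| ≤ 2 * |t| := by
  have h1 : (0:ℝ) < 1 + t := by
    have := abs_le.1 ht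
    linarith [this.1]
  have hub : Real.log (1 + t) ≤ t := by
    have := Real.log_le_sub_one_of_pos h1
    linarith
  have hinv : (0:ℝ) < (1 + t)⁻¹ := inv_pos.2 h1
  have hub2 : Real.log ((1 + t)⁻¹) ≤ (1 + t)⁻¹ - 1 := Real.log_le_sub_one_of_pos hinv
  have hinvle : (1 + t)⁻¹ ≤ 2 := by
    rw [inv_le_comm₀ h1 (by norm_num)]
    have := abs_le.1 ht
    linarith [this.1]
  have hlb : -(2 * |t|) ≤ Real.log (1 + t) := by
    have h3 : (1 + t)⁻¹ - 1 = -t / (1 + t) := by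
      field_simp; ring
    have h4 : -t / (1 + t) ≤ 2 * |t| := by
      rw [div_le_iff₀ h1]
      have hat := abs_le.1 ht
      have h5 : -t ≤ |t| := neg_le_abs t
      have h6 : (0:ℝ) ≤ |t| := abs_nonneg t
      nlinarith
    have := Real.log_inv (1 + t) ▸ hub2
    rw [Real.log_inv] at hub2
    linarith [hub2.trans (h3 ▸ h4)]
  have hub3 : Real.log (1 + t) ≤ 2 * |t| := by
    have : t ≤ |t| := le_abs_self t
    linarith [abs_nonneg t]
  exact abs_le.2 ⟨by linarith, hub3⟩

set_option maxHeartbeats 1000000 in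
lemma qExp_multipliable (q y : ℝ) (hq0 : 0 < q) (hq1 : q < 1) :
    Multipliable (fun j : ℕ => (1 + q ^ j * (q - 1) * y)⁻¹) := by
  set c : ℝ := |(q - 1) * y| with hc
  have hc0 : 0 ≤ c := abs_nonneg _
  -- pick k with q^k * c ≤ 1/2
  obtain ⟨k, hk⟩ : ∃ k : ℕ, q ^ k < 1 / (2 * (c + 1)) := by
    exact exists_pow_lt_of_lt_one (by positivity) hq1
  have hqk : q ^ k * c < 1/2 := by
    have h1 : q ^ k * (c + 1) < 1/2 := by
      rw [lt_div_iff₀ (by positivity : (0:ℝ) < 2 * (c + 1))] at hk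
      nlinarith
    nlinarith [pow_pos hq0 k]
  -- the tail terms
  set t : ℕ → ℝ := fun j => q ^ (j + k) * (q - 1) * y with htdef
  have habs : ∀ j, |t j| ≤ q ^ j * (q ^ k * c) := by
    intro j
    have : t j = q ^ j * (q ^ k * ((q - 1) * y)) := by
      simp only [htdef, pow_add]; ring
    rw [this, abs_mul, abs_mul, abs_of_nonneg (le_of_lt (pow_pos hq0 j)),
      abs_of_nonneg (le_of_lt (pow_pos hq0 k))]
  have hhalf : ∀ j, |t j| ≤ 1/2 := by
    intro j
    refine (habs j).trans ?_
    have hj1 : q ^ j ≤ 1 := pow_le_one₀ (le_of_lt hq0) (le_of_lt hq1)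
    nlinarith [mul_nonneg (le_of_lt (pow_pos hq0 k)) hc0, pow_pos hq0 j]
  have hpos : ∀ j, (0:ℝ) < 1 + t j := by
    intro j
    have := abs_le.1 (hhalf j)
    linarith [this.1]
  refine Multipliable.comp_nat_add (k := k) ?_
  have hinv : ∀ j : ℕ, (1 + q ^ (j + k) * (q - 1) * y)⁻¹ = (1 + t j)⁻¹ := fun j => rfl
  -- Multipliability via summability of logs
  have hsum : Summable fun j : ℕ => Real.log ((1 + t j)⁻¹) := by
    apply Summable.of_norm_bounded (g := fun j => 2 * (q ^ k * c) * q ^ j)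
    · exact (summable_geometric_of_lt_one (le_of_lt hq0) hq1).mul_left _
    · intro j
      rw [Real.norm_eq_abs, Real.log_inv, abs_neg]
      refine (abs_log_one_add_le (hhalf j)).trans ?_
      have := habs j
      nlinarith [abs_nonneg (t j)]
  have := Real.multipliable_of_summable_log (f := fun j => (1 + t j)⁻¹)
    (fun j => inv_pos.2 (hpos j)) hsum
  exact this

set_option maxHeartbeats 1000000 in
/-- The `q`-exponential `E_q(y) = ∏_{j=0}^∞ (1 + q^j (q-1) y)⁻¹` is an
eigenfunction of the `q`-derivative with eigenvalue `1`. -/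
theorem qExp_eigenfunction (q x : ℝ) (hq0 : 0 < q) (hq1 : q < 1) (hx : x ≠ 0)
    (hne : ∀ j : ℕ, 1 + q ^ j * (q - 1) * x ≠ 0)
    (E : ℝ → ℝ) (hE : ∀ y, E y = ∏' j : ℕ, (1 + q ^ j * (q - 1) * y)⁻¹) :
    (E (q * x) - E x) / ((q - 1) * x) = E x := by
  have hshift : ∀ j : ℕ, (1 + q ^ (j + 1) * (q - 1) * x)⁻¹
      = (1 + q ^ j * (q - 1) * (q * x))⁻¹ := by
    intro j; congr 1; ring
  have hmul : Multipliable fun j : ℕ => (1 + q ^ (j + 1) * (q - 1) * x)⁻¹ := by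
    simpa only [hshift] using qExp_multipliable q (q * x) hq0 hq1
  have hkey : E x = (1 + (q - 1) * x)⁻¹ * E (q * x) := by
    rw [hE x, hE (q * x)]
    rw [tprod_eq_zero_mul' hmul]
    simp only [pow_zero, one_mul, hshift]
  have h0 : 1 + (q - 1) * x ≠ 0 := by
    have := hne 0; simpa using this
  have hq1x : (q - 1) * x ≠ 0 := mul_ne_zero (by linarith [sub_ne_zero.2 (ne_of_lt hq1)]; ) hx
  have hEqx : E (q * x) = (1 + (q - 1) * x) * E x := by
    rw [hkey, ← mul_assoc, mul_inv_cancel₀ h0, one_mul]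
  rw [hEqx, div_eq_iff hq1x]
  ring
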